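/- Let n ≥ 3, let L = {y ∈ ℝⁿ : y₁ ≥ √(y₂² + ⋯ + yₙ²)} be the Lorentz cone, let A ∈ ℝ^{n×n} be symmetric, and let {v¹, …, vⁿ} be an orthonormal system of eigenvectors of A with A v¹ = λ v¹ and A vʲ = μ vʲ for j = 2, …, n, where λ < μ. Then the sublevel set [φ_A ≤ c] = {x ∈ int(L) : ⟨Ax, x⟩ ≤ c‖x‖²} is convex for every c ∈ ℝ (equivalently, q_A is spherically quasi-convex) if and only if some unit eigenvector of A corresponding to λ belongs to L (equivalently, v¹ ∈ L ∪ (−L)). -/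

import Mathlib

open scoped RealInnerProductSpace

/-- The quadratic form `x ↦ ⟨A x, x⟩` associated with a matrix `A`. -/
noncomputable def quadForm {n : ℕ} (A : Matrix (Fin n) (Fin n) ℝ)
    (x : EuclideanSpace ℝ (Fin n)) : ℝ :=
  ⟪Matrix.toEuclideanLin A x, x⟫

/-- `K` is a cone: closed under multiplication by positive scalars. -/
def IsCone {n : ℕ} (K : Set (EuclideanSpace ℝ (Fin n))) : Prop :=
  ∀ ⦃t : ℝ⦄, 0 < t → ∀ ⦃x⦄, x ∈ K → t • x ∈ K

/-- A proper cone: a pointed closed convex cone with nonempty interior. -/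
def IsProperCone {n : ℕ} (K : Set (EuclideanSpace ℝ (Fin n))) : Prop :=
  IsCone K ∧ Convex ℝ K ∧ IsClosed K ∧ K ∩ (-K) ⊆ {0} ∧ (interior K).Nonempty

/-- The dual cone `K* = {u : ⟨u, y⟩ ≥ 0 for all y ∈ K}`. -/
def dualCone {n : ℕ} (K : Set (EuclideanSpace ℝ (Fin n))) : Set (EuclideanSpace ℝ (Fin n)) :=
  {u | ∀ y ∈ K, 0 ≤ ⟪u, y⟫}

/-- The sublevel set `[φ_A ≤ c] = {x ∈ int K : ⟨A x, x⟩ ≤ c ‖x‖²}`. -/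
noncomputable def sublevel {n : ℕ} (A : Matrix (Fin n) (Fin n) ℝ)
    (K : Set (EuclideanSpace ℝ (Fin n))) (c : ℝ) : Set (EuclideanSpace ℝ (Fin n)) :=
  {x ∈ interior K | quadForm A x ≤ c * ‖x‖ ^ 2}

/-- `‖x²‖² = x₂² + ⋯ + xₙ²`, the squared norm of the tail of `x`. -/
noncomputable def tailNormSq {n : ℕ} [NeZero n] (x : EuclideanSpace ℝ (Fin n)) : ℝ :=
  ∑ i ∈ Finset.univ.erase 0, x i ^ 2

/-- The Lorentz cone `{y : √(y₂² + ⋯ + yₙ²) ≤ y₁}`. -/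
noncomputable def lorentzCone (n : ℕ) [NeZero n] : Set (EuclideanSpace ℝ (Fin n)) :=
  {y | Real.sqrt (tailNormSq y) ≤ y 0}

noncomputable def qt {n : ℕ} [NeZero n] (x : EuclideanSpace ℝ (Fin n)) :
    EuclideanSpace ℝ (Fin n) := WithLp.toLp 2 (fun i => if i = 0 then 0 else x i)

lemma qt_apply {n : ℕ} [NeZero n] (x : EuclideanSpace ℝ (Fin n)) (i : Fin n) :
    qt x i = if i = 0 then 0 else x i := rfl

lemma qt_smul_add {n : ℕ} [NeZero n] (a b : ℝ) (x y : EuclideanSpace ℝ (Fin n)) :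
    qt (a • x + b • y) = a • qt x + b • qt y := by
  ext i
  simp only [qt_apply, PiLp.add_apply, PiLp.smul_apply, smul_eq_mul]
  split <;> ring

lemma qt_sum_sq {n : ℕ} [NeZero n] (x : EuclideanSpace ℝ (Fin n)) :
    ∑ i, ‖qt x i‖ ^ 2 = tailNormSq x := by
  rw [tailNormSq, ← Finset.add_sum_erase _ (fun i => ‖qt x i‖ ^ 2) (Finset.mem_univ 0)]
  rw [show ‖qt x 0‖ ^ 2 = 0 by simp [qt_apply], zero_add]
  exact Finset.sum_congr rfl fun i hi => by
    simp [qt_apply, (Finset.mem_erase.mp hi).1, sq_abs]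

lemma norm_qt {n : ℕ} [NeZero n] (x : EuclideanSpace ℝ (Fin n)) :
    ‖qt x‖ = Real.sqrt (tailNormSq x) := by
  rw [EuclideanSpace.norm_eq, qt_sum_sq]

lemma inner_split {n : ℕ} [NeZero n] (x y : EuclideanSpace ℝ (Fin n)) :
    ⟪x, y⟫ = x 0 * y 0 + ⟪qt x, qt y⟫ := by
  rw [PiLp.inner_apply, PiLp.inner_apply]
  simp only [RCLike.inner_apply, starRingEnd_apply, star_trivial]
  rw [← Finset.add_sum_erase _ (fun i => y i * x i) (Finset.mem_univ 0)]
  congr 1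
  · exact mul_comm _ _
  rw [← Finset.add_sum_erase _ (fun i => qt y i * qt x i) (Finset.mem_univ 0)]
  rw [show qt y 0 * qt x 0 = 0 by simp [qt_apply], zero_add]
  exact (Finset.sum_congr rfl fun i hi => by
    simp [qt_apply, (Finset.mem_erase.mp hi).1]).symm

lemma mem_lorentz_iff {n : ℕ} [NeZero n] (x : EuclideanSpace ℝ (Fin n)) :
    x ∈ lorentzCone n ↔ ‖qt x‖ ≤ x 0 := by
  rw [lorentzCone, Set.mem_setOf_eq, norm_qt]

lemma norm_qt_le {n : ℕ} [NeZero n] (x : EuclideanSpace ℝ (Fin n)) : ‖qt x‖ ≤ ‖x‖ := by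
  rw [EuclideanSpace.norm_eq, EuclideanSpace.norm_eq]
  apply Real.sqrt_le_sqrt
  apply Finset.sum_le_sum
  intro i _
  rw [qt_apply]
  split
  · simpa using sq_nonneg ‖x i‖
  · exact le_refl _

lemma abs_coord_le {n : ℕ} [NeZero n] (x : EuclideanSpace ℝ (Fin n)) (i : Fin n) :
    |x i| ≤ ‖x‖ := by
  rw [EuclideanSpace.norm_eq]
  rw [show |x i| = Real.sqrt (‖x i‖ ^ 2) by simp [Real.sqrt_sq_eq_abs]]
  apply Real.sqrt_le_sqrt
  exact Finset.single_le_sum (f := fun j => ‖x j‖ ^ 2) (fun j _ => by positivity)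
    (Finset.mem_univ i)

lemma lorentz_convex {n : ℕ} [NeZero n] : Convex ℝ (lorentzCone n) := by
  intro x hx y hy a b ha hb hab
  rw [mem_lorentz_iff] at *
  rw [qt_smul_add]
  calc ‖a • qt x + b • qt y‖ ≤ ‖a • qt x‖ + ‖b • qt y‖ := norm_add_le _ _
    _ = a * ‖qt x‖ + b * ‖qt y‖ := by
        rw [norm_smul, norm_smul, Real.norm_eq_abs, Real.norm_eq_abs, abs_of_nonneg ha,
          abs_of_nonneg hb]
    _ ≤ a * x 0 + b * y 0 := by
        apply add_le_add (mul_le_mul_of_nonneg_left hx ha) (mul_le_mul_of_nonneg_left hy hb)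
    _ = (a • x + b • y) 0 := by simp [PiLp.add_apply, PiLp.smul_apply]

lemma qt_sub {n : ℕ} [NeZero n] (x y : EuclideanSpace ℝ (Fin n)) :
    qt (y - x) = qt y - qt x := by
  ext i
  simp only [qt_apply, PiLp.sub_apply]
  split <;> ring

lemma mem_interior_lorentz {n : ℕ} [NeZero n] (x : EuclideanSpace ℝ (Fin n))
    (hx : ‖qt x‖ < x 0) : x ∈ interior (lorentzCone n) := by
  rw [mem_interior_iff_mem_nhds, Metric.mem_nhds_iff]
  refine ⟨(x 0 - ‖qt x‖) / 2, by linarith, ?_⟩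
  intro y hy
  rw [Metric.mem_ball, dist_eq_norm] at hy
  rw [mem_lorentz_iff]
  have h1 : ‖qt y‖ ≤ ‖qt x‖ + ‖y - x‖ := by
    calc ‖qt y‖ = ‖qt x + (qt y - qt x)‖ := by rw [add_sub_cancel]
      _ ≤ ‖qt x‖ + ‖qt y - qt x‖ := norm_add_le _ _
      _ ≤ ‖qt x‖ + ‖y - x‖ := by
          rw [← qt_sub]; exact add_le_add le_rfl (norm_qt_le _)
  have h2 : |y 0 - x 0| ≤ ‖y - x‖ := by
    have := abs_coord_le (y - x) 0
    rwa [PiLp.sub_apply] at this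
  have h3 := abs_le.mp h2
  linarith [h3.1]

lemma inner_nonneg_of_mem {n : ℕ} [NeZero n] {x y : EuclideanSpace ℝ (Fin n)}
    (hx : x ∈ lorentzCone n) (hy : y ∈ lorentzCone n) : 0 ≤ ⟪x, y⟫ := by
  rw [mem_lorentz_iff] at hx hy
  rw [inner_split]
  have h1 : |⟪qt x, qt y⟫| ≤ ‖qt x‖ * ‖qt y‖ := abs_real_inner_le_norm _ _
  have h2 : ‖qt x‖ * ‖qt y‖ ≤ x 0 * y 0 :=
    mul_le_mul hx hy (norm_nonneg _) ((norm_nonneg (qt x)).trans hx)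
  have := (abs_le.mp h1).1
  linarith

lemma quad_decomp {n : ℕ} [NeZero n] (A : Matrix (Fin n) (Fin n) ℝ)
    (v : Fin n → EuclideanSpace ℝ (Fin n)) (hv : Orthonormal ℝ v)
    (lam mu : ℝ)
    (h1 : Matrix.toEuclideanLin A (v 0) = lam • v 0)
    (hrest : ∀ i : Fin n, i ≠ 0 → Matrix.toEuclideanLin A (v i) = mu • v i)
    (x : EuclideanSpace ℝ (Fin n)) :
    quadForm A x = mu * ‖x‖ ^ 2 + (lam - mu) * ⟪v 0, x⟫ ^ 2 := by
  classical
  have hcard : Fintype.card (Fin n) = Module.finrank ℝ (EuclideanSpace ℝ (Fin n)) := by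
    simp [finrank_euclideanSpace]
  let b := basisOfLinearIndependentOfCardEqFinrank hv.linearIndependent hcard
  have hbv : ⇑b = v := coe_basisOfLinearIndependentOfCardEqFinrank _ _
  have hvb : Orthonormal ℝ ⇑b := by rwa [hbv]
  have hx : ∑ i, ⟪v i, x⟫ • v i = x := by
    have := (b.toOrthonormalBasis hvb).sum_repr' x
    rwa [Module.Basis.coe_toOrthonormalBasis, hbv] at this
  have hTx : Matrix.toEuclideanLin A x
      = ∑ i, ((if i = 0 then lam else mu) * ⟪v i, x⟫) • v i := by
    conv_lhs => rw [← hx]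
    rw [map_sum]
    refine Finset.sum_congr rfl fun i _ => ?_
    rw [LinearMap.map_smul]
    by_cases hi : i = 0
    · subst hi; rw [h1, smul_smul, if_pos rfl, mul_comm]
    · rw [hrest i hi, smul_smul, if_neg hi, mul_comm]
  have hq : quadForm A x = ∑ i, (if i = 0 then lam else mu) * ⟪v i, x⟫ ^ 2 := by
    rw [quadForm, hTx, sum_inner]
    refine Finset.sum_congr rfl fun i _ => ?_
    rw [real_inner_smul_left]
    ring
  have hnx : ‖x‖ ^ 2 = ∑ i, ⟪v i, x⟫ ^ 2 := by
    rw [← real_inner_self_eq_norm_sq]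
    conv_lhs => rw [← hx]
    rw [sum_inner]
    refine Finset.sum_congr rfl fun i _ => ?_
    rw [real_inner_smul_left, hv.inner_right_fintype (fun j => ⟪v j, x⟫) i]
    ring
  rw [hq, hnx]
  rw [← Finset.add_sum_erase _ (fun i => (if i = 0 then lam else mu) * ⟪v i, x⟫ ^ 2)
      (Finset.mem_univ 0),
    ← Finset.add_sum_erase _ (fun i => ⟪v i, x⟫ ^ 2) (Finset.mem_univ 0)]
  have hsum : ∑ i ∈ Finset.univ.erase 0, (if i = 0 then lam else mu) * ⟪v i, x⟫ ^ 2
      = mu * ∑ i ∈ Finset.univ.erase 0, ⟪v i, x⟫ ^ 2 := by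
    rw [Finset.mul_sum]
    exact Finset.sum_congr rfl fun i hi => by
      simp [(Finset.mem_erase.mp hi).1]
  rw [hsum, if_pos rfl]
  ring

lemma convex_of_mem {n : ℕ} [NeZero n] (A : Matrix (Fin n) (Fin n) ℝ)
    (lam mu : ℝ) (hlm : lam < mu) (u : EuclideanSpace ℝ (Fin n))
    (hu : u ∈ lorentzCone n)
    (hq : ∀ x, quadForm A x = mu * ‖x‖ ^ 2 + (lam - mu) * ⟪u, x⟫ ^ 2)
    (c : ℝ) : Convex ℝ (sublevel A (lorentzCone n) c) := by
  intro x hx y hy a b ha hb hab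
  obtain ⟨hxi, hxq⟩ := hx
  obtain ⟨hyi, hyq⟩ := hy
  have hzi : a • x + b • y ∈ interior (lorentzCone n) :=
    lorentz_convex.interior hxi hyi ha hb hab
  refine ⟨hzi, ?_⟩
  by_cases hc : mu ≤ c
  · rw [hq]
    nlinarith [sq_nonneg (⟪u, a • x + b • y⟫ : ℝ), sq_nonneg ‖a • x + b • y‖,
      mul_le_mul_of_nonneg_right hc (sq_nonneg ‖a • x + b • y‖)]
  · push_neg at hc
    set t : ℝ := (mu - c) / (mu - lam) with ht
    have htpos : 0 < t := div_pos (by linarith) (by linarith)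
    have htmul : t * (mu - lam) = mu - c := div_mul_cancel₀ _ (by linarith)
    set s : ℝ := Real.sqrt t with hs
    have hs2 : s ^ 2 = t := Real.sq_sqrt htpos.le
    have hsnn : 0 ≤ s := Real.sqrt_nonneg t
    -- inner products are nonneg
    have hux : 0 ≤ ⟪u, x⟫ := inner_nonneg_of_mem hu (interior_subset hxi)
    have huy : 0 ≤ ⟪u, y⟫ := inner_nonneg_of_mem hu (interior_subset hyi)
    -- from membership: s * ‖x‖ ≤ ⟪u, x⟫
    have key : ∀ w : EuclideanSpace ℝ (Fin n), 0 ≤ ⟪u, w⟫ →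
        quadForm A w ≤ c * ‖w‖ ^ 2 → s * ‖w‖ ≤ ⟪u, w⟫ := by
      intro w hw hwq
      rw [hq] at hwq
      have h2 : t * ‖w‖ ^ 2 ≤ ⟪u, w⟫ ^ 2 := by nlinarith
      have h3 : (s * ‖w‖) ^ 2 ≤ ⟪u, w⟫ ^ 2 := by
        rw [mul_pow, hs2]; nlinarith [norm_nonneg w]
      exact le_of_pow_le_pow_left₀ two_ne_zero hw h3
    have hkx := key x hux hxq
    have hky := key y huy hyq
    -- combine
    have hnz : ‖a • x + b • y‖ ≤ a * ‖x‖ + b * ‖y‖ := by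
      calc ‖a • x + b • y‖ ≤ ‖a • x‖ + ‖b • y‖ := norm_add_le _ _
        _ = a * ‖x‖ + b * ‖y‖ := by
            rw [norm_smul, norm_smul, Real.norm_eq_abs, Real.norm_eq_abs,
              abs_of_nonneg ha, abs_of_nonneg hb]
    have hiz : ⟪u, a • x + b • y⟫ = a * ⟪u, x⟫ + b * ⟪u, y⟫ := by
      rw [inner_add_right, real_inner_smul_right, real_inner_smul_right]
    have hkey : s * ‖a • x + b • y‖ ≤ ⟪u, a • x + b • y⟫ := by
      rw [hiz]
      calc s * ‖a • x + b • y‖ ≤ s * (a * ‖x‖ + b * ‖y‖) :=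
            mul_le_mul_of_nonneg_left hnz hsnn
        _ = a * (s * ‖x‖) + b * (s * ‖y‖) := by ring
        _ ≤ a * ⟪u, x⟫ + b * ⟪u, y⟫ :=
            add_le_add (mul_le_mul_of_nonneg_left hkx ha)
              (mul_le_mul_of_nonneg_left hky hb)
    have hsq : t * ‖a • x + b • y‖ ^ 2 ≤ ⟪u, a • x + b • y⟫ ^ 2 := by
      have h4 : (s * ‖a • x + b • y‖) ^ 2 ≤ ⟪u, a • x + b • y⟫ ^ 2 := by
        apply pow_le_pow_left₀ (by positivity) hkey
      rwa [mul_pow, hs2] at h4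
    rw [hq]
    nlinarith

lemma qt_qt {n : ℕ} [NeZero n] (x : EuclideanSpace ℝ (Fin n)) : qt (qt x) = qt x := by
  ext i
  rw [qt_apply, qt_apply]
  split <;> rfl

lemma inner_qt_self {n : ℕ} [NeZero n] (x : EuclideanSpace ℝ (Fin n)) :
    ⟪x, qt x⟫ = ‖qt x‖ ^ 2 := by
  rw [inner_split x (qt x), qt_qt, qt_apply, if_pos rfl, mul_zero, zero_add,
    real_inner_self_eq_norm_sq]

set_option maxHeartbeats 2000000 in
/-- Theorem 4 of the paper: for `A` with eigenvalues `λ < μ = ⋯ = μ`, all sublevel sets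
`[φ_A ≤ c]` over the Lorentz cone are convex (i.e. `q_A` is spherically quasi-convex)
iff some unit eigenvector of `A` for `λ` belongs to `L`, i.e. `v¹ ∈ L ∪ (-L)`. -/
theorem stmt19 (n : ℕ) [NeZero n] (hn : 3 ≤ n)
    (A : Matrix (Fin n) (Fin n) ℝ) (hA : A.IsSymm)
    (v : Fin n → EuclideanSpace ℝ (Fin n)) (hv : Orthonormal ℝ v)
    (lam mu : ℝ) (hlm : lam < mu)
    (h1 : Matrix.toEuclideanLin A (v 0) = lam • v 0)
    (hrest : ∀ i : Fin n, i ≠ 0 → Matrix.toEuclideanLin A (v i) = mu • v i) :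
    (∀ c : ℝ, Convex ℝ (sublevel A (lorentzCone n) c)) ↔
      v 0 ∈ lorentzCone n ∪ -(lorentzCone n) := by
  have hq := quad_decomp A v hv lam mu h1 hrest
  constructor
  · intro h
    by_contra hmem
    rw [Set.mem_union, not_or] at hmem
    obtain ⟨hm1, hm2⟩ := hmem
    set a : ℝ := v 0 0 with ha
    set b : ℝ := ‖qt (v 0)‖ with hb
    have hb1 : a < b := by
      by_contra hcon
      exact hm1 (by rw [lorentzCone, Set.mem_setOf_eq, ← norm_qt]; linarith)
    have hb2 : -a < b := by
      by_contra hcon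
      apply hm2
      rw [Set.mem_neg, lorentzCone, Set.mem_setOf_eq, ← norm_qt]
      have hqneg : qt (-(v 0)) = -(qt (v 0)) := by
        ext i
        rw [qt_apply, PiLp.neg_apply, PiLp.neg_apply, qt_apply]
        split <;> simp
      rw [hqneg, norm_neg, PiLp.neg_apply]
      linarith
    have habs : |a| < b := abs_lt.mpr ⟨by linarith, hb1⟩
    have hbpos : 0 < b := lt_of_le_of_lt (abs_nonneg a) habs
    set s : ℝ := (|a| / b + 1) / 2 with hs
    have hs1 : |a| / b < 1 := (div_lt_one hbpos).mpr habs
    have hs0 : 0 < s := by positivity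
    have hslt1 : s < 1 := by rw [hs]; linarith
    have hasb : |a| < s * b := by
      rw [← div_lt_iff₀ hbpos]
      rw [hs]; linarith
    have hsb : 0 < s * b := mul_pos hs0 hbpos
    have ha1 : a + s * b > 0 := by
      have := neg_abs_le a; linarith
    have ha2 : a - s * b < 0 := by
      have := le_abs_self a; linarith
    set e0 : EuclideanSpace ℝ (Fin n) := EuclideanSpace.single 0 1 with he0
    set w : EuclideanSpace ℝ (Fin n) := (s / b) • qt (v 0) with hw
    have hw0 : w 0 = 0 := by
      rw [hw, PiLp.smul_apply, qt_apply, if_pos rfl, smul_zero]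
    have hnw : ‖w‖ = s := by
      rw [hw, norm_smul, Real.norm_eq_abs, abs_of_nonneg (by positivity : (0:ℝ) ≤ s / b),
        ← hb, div_mul_cancel₀ _ hbpos.ne']
    have hiw : ⟪v 0, w⟫ = s * b := by
      rw [hw, real_inner_smul_right, inner_qt_self, ← hb]
      field_simp
    set x : EuclideanSpace ℝ (Fin n) := e0 + w with hx
    set y : EuclideanSpace ℝ (Fin n) := e0 - w with hy
    have hx0 : x 0 = 1 := by
      rw [hx, PiLp.add_apply, hw0, he0, EuclideanSpace.single_apply, if_pos rfl, add_zero]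
    have hy0 : y 0 = 1 := by
      rw [hy, PiLp.sub_apply, hw0, he0, EuclideanSpace.single_apply, if_pos rfl, sub_zero]
    have hqx : qt x = w := by
      ext i
      rw [qt_apply, hx, PiLp.add_apply, he0, EuclideanSpace.single_apply]
      split
      · next hi => rw [hi] at *; exact hw0.symm
      · next hi => exact zero_add _
    have hqy : qt y = -w := by
      ext i
      rw [qt_apply, hy, PiLp.sub_apply, he0, EuclideanSpace.single_apply, PiLp.neg_apply]
      split
      · next hi => rw [hi] at *; rw [hw0]; simp
      · next hi => exact zero_sub _
    have hxi : x ∈ interior (lorentzCone n) := by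
      apply mem_interior_lorentz
      rw [hqx, hnw, hx0]; exact hslt1
    have hyi : y ∈ interior (lorentzCone n) := by
      apply mem_interior_lorentz
      rw [hqy, norm_neg, hnw, hy0]; exact hslt1
    have hnx : ‖x‖ ^ 2 = 1 + s ^ 2 := by
      rw [← real_inner_self_eq_norm_sq, inner_split, hqx, hx0,
        real_inner_self_eq_norm_sq, hnw]
      ring
    have hny : ‖y‖ ^ 2 = 1 + s ^ 2 := by
      rw [← real_inner_self_eq_norm_sq, inner_split, hqy, hy0,
        inner_neg_neg, real_inner_self_eq_norm_sq, hnw]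
      ring
    have hie : ⟪v 0, e0⟫ = a := by
      rw [he0, EuclideanSpace.inner_single_right]
      simp [ha]
    have hivx : ⟪v 0, x⟫ = a + s * b := by
      rw [hx, inner_add_right, hie, hiw]
    have hivy : ⟪v 0, y⟫ = a - s * b := by
      rw [hy, inner_sub_right, hie, hiw]
    set M : ℝ := min ((a + s * b) ^ 2) ((a - s * b) ^ 2) with hM
    have hMpos : 0 < M := lt_min (by positivity) (by nlinarith)
    set t : ℝ := M / (1 + s ^ 2) with htdef
    have ht0 : 0 < t := div_pos hMpos (by positivity)
    have htM : t * (1 + s ^ 2) = M := div_mul_cancel₀ _ (by positivity)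
    set c : ℝ := mu - t * (mu - lam) with hcdef
    have hxmem : x ∈ sublevel A (lorentzCone n) c := by
      refine ⟨hxi, ?_⟩
      rw [hq x, hnx, hivx, hcdef]
      have h6 : t * (1 + s ^ 2) ≤ (a + s * b) ^ 2 := htM.le.trans (min_le_left _ _)
      have hkey : t * ((mu - lam) * (1 + s ^ 2)) ≤ (mu - lam) * (a + s * b) ^ 2 := by
        calc t * ((mu - lam) * (1 + s ^ 2)) = (mu - lam) * (t * (1 + s ^ 2)) := by ring
          _ ≤ (mu - lam) * (a + s * b) ^ 2 :=
              mul_le_mul_of_nonneg_left h6 (by linarith)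
      linarith [hkey]
    have hymem : y ∈ sublevel A (lorentzCone n) c := by
      refine ⟨hyi, ?_⟩
      rw [hq y, hny, hivy, hcdef]
      have h6 : t * (1 + s ^ 2) ≤ (a - s * b) ^ 2 := htM.le.trans (min_le_right _ _)
      have hkey : t * ((mu - lam) * (1 + s ^ 2)) ≤ (mu - lam) * (a - s * b) ^ 2 := by
        calc t * ((mu - lam) * (1 + s ^ 2)) = (mu - lam) * (t * (1 + s ^ 2)) := by ring
          _ ≤ (mu - lam) * (a - s * b) ^ 2 :=
              mul_le_mul_of_nonneg_left h6 (by linarith)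
      linarith [hkey]
    set θ : ℝ := (1 - a / (s * b)) / 2 with hθ
    clear_value a b s M t c θ
    have hθ0 : 0 < θ := by
      have : a / (s * b) < 1 := (div_lt_one hsb).mpr (by linarith [le_abs_self a])
      rw [hθ]; linarith
    have hθ1 : θ < 1 := by
      have : -1 < a / (s * b) := by
        rw [lt_div_iff₀ hsb]; linarith [neg_abs_le a]
      rw [hθ]; linarith
    have hz := h c hxmem hymem hθ0.le (by linarith : (0:ℝ) ≤ 1 - θ) (by ring)
    set z : EuclideanSpace ℝ (Fin n) := θ • x + (1 - θ) • y with hzdef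
    clear_value z
    have hiz : ⟪v 0, z⟫ = 0 := by
      rw [hzdef, inner_add_right, real_inner_smul_right, real_inner_smul_right, hivx, hivy, hθ]
      have hdm : a / (s * b) * (s * b) = a := div_mul_cancel₀ a hsb.ne'
      linear_combination -hdm
    have hz0 : z 0 = 1 := by
      rw [hzdef, PiLp.add_apply, PiLp.smul_apply, PiLp.smul_apply, hx0, hy0,
        smul_eq_mul, smul_eq_mul]
      ring
    have hznz : z ≠ 0 := by
      intro hcon
      rw [hcon] at hz0
      rw [show (0 : EuclideanSpace ℝ (Fin n)) 0 = 0 from rfl] at hz0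
      exact zero_ne_one hz0
    have hnzpos : 0 < ‖z‖ ^ 2 := pow_pos (norm_pos_iff.mpr hznz) 2
    have hq2 := hz.2
    rw [hq z, hiz, hcdef] at hq2
    have hpos : 0 < t * (mu - lam) * ‖z‖ ^ 2 :=
      mul_pos (mul_pos ht0 (by linarith)) hnzpos
    linarith [hpos, hq2]
  · intro hmem c
    rcases hmem with hmem | hmem
    · exact convex_of_mem A lam mu hlm (v 0) hmem hq c
    · rw [Set.mem_neg] at hmem
      apply convex_of_mem A lam mu hlm (-(v 0)) hmem
      intro x
      rw [hq x, inner_neg_left, neg_sq]
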